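/- In the complete bipartite graph K_{m,2} with parts X = {p,q} and Y of size m ≥ 3: g({q}) − g(∅) = 2(m+1) while g({p,q}) − g({p}) = m(m+1). Since m(m+1) > 2(m+1), the function g violates submodularity: with S = ∅ ⊆ T = {p} and q ∉ T, g(S ∪ {q}) − g(S) < g(T ∪ {q}) − g(T). -/
import Mathlib


open SimpleGraph

/-- A shortest path from `s` to `t`, of length `ℓ = d(s,t)`, given by its vertices
`v 0, …, v ℓ`. -/
def IsShortestPath {W : Type*} (G : SimpleGraph W) (s t : W) (ℓ : ℕ) (v : ℕ → W) : Prop :=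
  v 0 = s ∧ v ℓ = t ∧ ℓ = G.dist s t ∧ ∀ i < ℓ, G.Adj (v i) (v (i + 1))

/-- `g(S)`: the number of ordered pairs `(s,t)` of distinct vertices such that every
shortest path from `s` to `t` contains a vertex of `S`. -/
noncomputable def numPairsCaptured {W : Type*} (G : SimpleGraph W) (S : Set W) : ℕ :=
  {p : W × W | p.1 ≠ p.2 ∧
    ∀ ℓ v, IsShortestPath G p.1 p.2 ℓ v → ∃ i ≤ ℓ, v i ∈ S}.ncard

/-- `g` for the complete bipartite graph `K_{m,2}`, with parts `Fin 2` (containing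
`p = Sum.inl 0` and `q = Sum.inl 1`) and `Fin m`. -/
noncomputable def gK (m : ℕ) (S : Set (Fin 2 ⊕ Fin m)) : ℕ :=
  numPairsCaptured (completeBipartiteGraph (Fin 2) (Fin m)) S

/- ### Auxiliary lemmas -/

lemma cap_adj {W : Type*} {G : SimpleGraph W} {s t : W} (h : G.Adj s t) (S : Set W) :
    (∀ ℓ v, IsShortestPath G s t ℓ v → ∃ i ≤ ℓ, v i ∈ S) ↔ s ∈ S ∨ t ∈ S := by
  constructor
  · intro hc
    obtain ⟨i, hi, hv⟩ := hc 1 (fun i => if i = 0 then s else t)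
      ⟨by simp, by simp, (SimpleGraph.dist_eq_one_iff_adj.mpr h).symm, by
        intro i hi
        interval_cases i
        simpa using h⟩
    interval_cases i
    · exact Or.inl (by simpa using hv)
    · exact Or.inr (by simpa using hv)
  · rintro (hs | ht) ℓ v ⟨h0, h1, -, -⟩
    · exact ⟨0, Nat.zero_le _, h0 ▸ hs⟩
    · exact ⟨ℓ, le_rfl, h1 ▸ ht⟩

lemma cap_two {W : Type*} {G : SimpleGraph W} {s t : W} (h : G.dist s t = 2) (S : Set W) :
    (∀ ℓ v, IsShortestPath G s t ℓ v → ∃ i ≤ ℓ, v i ∈ S) ↔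
      s ∈ S ∨ t ∈ S ∨ ∀ w, G.Adj s w → G.Adj w t → w ∈ S := by
  constructor
  · intro hc
    by_cases hs : s ∈ S
    · exact Or.inl hs
    by_cases ht : t ∈ S
    · exact Or.inr (Or.inl ht)
    refine Or.inr (Or.inr fun w hw1 hw2 => ?_)
    obtain ⟨i, hi, hv⟩ := hc 2 (fun i => if i = 0 then s else if i = 1 then w else t)
      ⟨by simp, by norm_num, h.symm, by
        intro i hi
        interval_cases i <;> simpa⟩
    interval_cases i
    · exact absurd (by simpa using hv) hs
    · simpa using hv
    · exact absurd (by norm_num at hv; exact hv) ht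
  · rintro hS ℓ v ⟨h0, h1, hd, hadj⟩
    rw [h] at hd
    rcases hS with hs | ht | hmid
    · exact ⟨0, Nat.zero_le _, h0 ▸ hs⟩
    · exact ⟨ℓ, le_rfl, h1 ▸ ht⟩
    · refine ⟨1, by omega, hmid (v 1) ?_ ?_⟩
      · have := hadj 0 (by omega); rwa [h0] at this
      · have := hadj 1 (by omega)
        subst hd; rwa [h1] at this

section K
variable {m : ℕ}

lemma dist_ll (hm : 0 < m) {a b : Fin 2} (hab : a ≠ b) :
    (completeBipartiteGraph (Fin 2) (Fin m)).dist (Sum.inl a) (Sum.inl b) = 2 := by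
  have hadj1 : (completeBipartiteGraph (Fin 2) (Fin m)).Adj (Sum.inl a) (Sum.inr ⟨0, hm⟩) := by simp
  have hadj2 : (completeBipartiteGraph (Fin 2) (Fin m)).Adj (Sum.inr ⟨0, hm⟩) (Sum.inl b) := by simp
  set wlk := SimpleGraph.Walk.cons hadj1 (SimpleGraph.Walk.cons hadj2 SimpleGraph.Walk.nil)
  have hle : (completeBipartiteGraph (Fin 2) (Fin m)).dist (Sum.inl a) (Sum.inl b) ≤ 2 := by
    have := SimpleGraph.dist_le wlk
    simpa [wlk] using this
  have hne : (Sum.inl a : Fin 2 ⊕ Fin m) ≠ Sum.inl b := by simpa using hab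
  have hpos := SimpleGraph.Reachable.pos_dist_of_ne ⟨wlk⟩ hne
  have h1 : (completeBipartiteGraph (Fin 2) (Fin m)).dist (Sum.inl a) (Sum.inl b) ≠ 1 := fun h => by
    have := SimpleGraph.dist_eq_one_iff_adj.mp h; simp at this
  omega

lemma dist_rr {a b : Fin m} (hab : a ≠ b) :
    (completeBipartiteGraph (Fin 2) (Fin m)).dist (Sum.inr a) (Sum.inr b) = 2 := by
  have hadj1 : (completeBipartiteGraph (Fin 2) (Fin m)).Adj (Sum.inr a) (Sum.inl 0) := by simp
  have hadj2 : (completeBipartiteGraph (Fin 2) (Fin m)).Adj (Sum.inl 0) (Sum.inr b) := by simp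
  set wlk := SimpleGraph.Walk.cons hadj1 (SimpleGraph.Walk.cons hadj2 SimpleGraph.Walk.nil)
  have hle : (completeBipartiteGraph (Fin 2) (Fin m)).dist (Sum.inr a) (Sum.inr b) ≤ 2 := by
    have := SimpleGraph.dist_le wlk
    simpa [wlk] using this
  have hne : (Sum.inr a : Fin 2 ⊕ Fin m) ≠ Sum.inr b := by simpa using hab
  have hpos := SimpleGraph.Reachable.pos_dist_of_ne ⟨wlk⟩ hne
  have h1 : (completeBipartiteGraph (Fin 2) (Fin m)).dist (Sum.inr a) (Sum.inr b) ≠ 1 := fun h => by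
    have := SimpleGraph.dist_eq_one_iff_adj.mp h; simp at this
  omega

/-- Characterization of captured pairs in `K_{m,2}`. -/
lemma cap_iff (hm : 0 < m) (S : Set (Fin 2 ⊕ Fin m)) (x y : Fin 2 ⊕ Fin m) (hxy : x ≠ y) :
    (∀ ℓ v, IsShortestPath (completeBipartiteGraph (Fin 2) (Fin m)) x y ℓ v → ∃ i ≤ ℓ, v i ∈ S) ↔
      (x ∈ S ∨ y ∈ S ∨
        Sum.elim (fun _ => Sum.elim (fun _ => ∀ z : Fin m, Sum.inr z ∈ S) (fun _ => False) y)
          (fun _ => Sum.elim (fun _ => False) (fun _ => ∀ a : Fin 2, Sum.inl a ∈ S) y) x) := by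
  rcases x with a | a <;> rcases y with b | b
  · have hab : a ≠ b := fun h => hxy (by rw [h])
    rw [cap_two (dist_ll hm hab)]
    simp only [Sum.elim_inl]
    constructor
    · rintro (h | h | h)
      · exact Or.inl h
      · exact Or.inr (Or.inl h)
      · exact Or.inr (Or.inr fun z => h (Sum.inr z) (by simp) (by simp))
    · rintro (h | h | h)
      · exact Or.inl h
      · exact Or.inr (Or.inl h)
      · refine Or.inr (Or.inr fun w hw1 hw2 => ?_)
        rcases w with c | c
        · simp at hw1
        · exact h c
  · rw [cap_adj (by simp)]; simp
  · rw [cap_adj (by simp)]; simp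
  · have hab : a ≠ b := fun h => hxy (by rw [h])
    rw [cap_two (dist_rr hab)]
    simp only [Sum.elim_inr]
    constructor
    · rintro (h | h | h)
      · exact Or.inl h
      · exact Or.inr (Or.inl h)
      · exact Or.inr (Or.inr fun c => h (Sum.inl c) (by simp) (by simp))
    · rintro (h | h | h)
      · exact Or.inl h
      · exact Or.inr (Or.inl h)
      · refine Or.inr (Or.inr fun w hw1 hw2 => ?_)
        rcases w with c | c
        · exact h c
        · simp at hw1
end K

lemma card_marked {α : Type*} [Fintype α] [DecidableEq α] (c : α) :
    ({z : α × α | z.1 ≠ z.2 ∧ (z.1 = c ∨ z.2 = c)}).ncard = 2 * (Fintype.card α - 1) := by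
  classical
  have hset : {z : α × α | z.1 ≠ z.2 ∧ (z.1 = c ∨ z.2 = c)} =
      ↑(({c} : Finset α) ×ˢ (Finset.univ.erase c) ∪ (Finset.univ.erase c) ×ˢ ({c} : Finset α)) := by
    ext ⟨x, y⟩
    simp only [Set.mem_setOf_eq, Finset.coe_union, Set.mem_union, Finset.coe_product,
      Set.mem_prod, Finset.coe_singleton, Set.mem_singleton_iff, Finset.coe_erase,
      Set.mem_diff, Finset.coe_univ, Set.mem_univ, true_and]
    constructor
    · rintro ⟨hne, h | h⟩
      · subst h; exact Or.inl ⟨rfl, fun hy => hne (by simpa using hy.symm)⟩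
      · subst h; exact Or.inr ⟨fun hx => hne (by simpa using hx), rfl⟩
    · rintro (⟨hx, hy⟩ | ⟨hx, hy⟩)
      · subst hx; exact ⟨fun h => hy (by simpa using h.symm), Or.inl rfl⟩
      · subst hy; exact ⟨fun h => hx (by simpa using h), Or.inr rfl⟩
  rw [hset, Set.ncard_coe_finset]
  have hdisj : Disjoint (({c} : Finset α) ×ˢ (Finset.univ.erase c))
      ((Finset.univ.erase c) ×ˢ ({c} : Finset α)) := by
    rw [Finset.disjoint_left]
    rintro ⟨x, y⟩ h1 h2
    simp only [Finset.mem_product, Finset.mem_singleton, Finset.mem_erase] at h1 h2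
    exact h1.2.1 h2.2
  rw [Finset.card_union_of_disjoint hdisj]
  simp [Finset.card_erase_of_mem]
  omega

lemma card_offdiag {α : Type*} [Fintype α] [DecidableEq α] :
    ({z : α × α | z.1 ≠ z.2}).ncard = Fintype.card α * Fintype.card α - Fintype.card α := by
  have hset : {z : α × α | z.1 ≠ z.2} = ↑(Finset.univ.offDiag (α := α)) := by
    ext ⟨x, y⟩
    simp [Finset.mem_offDiag]
  rw [hset, Set.ncard_coe_finset, Finset.offDiag_card]
  simp

/-- In `K_{m,2}` with parts `{p,q}` and `Y` of size `m ≥ 3`: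
`g({q}) - g(∅) = 2(m+1)` while `g({p,q}) - g({p}) = m(m+1)`, and since
`m(m+1) > 2(m+1)`, `g` violates submodularity (with `S = ∅ ⊆ T = {p}` and `q ∉ T`). -/
theorem g_not_submodular (m : ℕ) (hm : 3 ≤ m) :
    gK m {Sum.inl 1} - gK m ∅ = 2 * (m + 1) ∧
      gK m {Sum.inl 0, Sum.inl 1} - gK m {Sum.inl 0} = m * (m + 1) ∧
      gK m {Sum.inl 1} - gK m ∅ <
        gK m {Sum.inl 0, Sum.inl 1} - gK m {Sum.inl 0} := by
  have hm0 : 0 < m := by omega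
  have hcard : Fintype.card (Fin 2 ⊕ Fin m) = m + 2 := by simp [Fintype.card_sum]; omega
  -- g(∅) = 0
  have h0 : gK m ∅ = 0 := by
    unfold gK numPairsCaptured
    convert Set.ncard_empty ((Fin 2 ⊕ Fin m) × (Fin 2 ⊕ Fin m))
    ext ⟨x, y⟩
    simp only [Set.mem_setOf_eq, Set.mem_empty_iff_false, iff_false, not_and]
    intro hne hc
    have := (cap_iff hm0 ∅ x y hne).mp hc
    rcases x with a | a <;> rcases y with b | b <;>
      simp only [Sum.elim_inl, Sum.elim_inr, Set.mem_empty_iff_false, false_or] at this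
    · exact (this ⟨0, hm0⟩)
    · exact this 0
  -- g({q}) for a single left vertex c
  have hone : ∀ c : Fin 2, gK m {Sum.inl c} = 2 * (m + 1) := by
    intro c
    unfold gK numPairsCaptured
    have hset : {p : (Fin 2 ⊕ Fin m) × (Fin 2 ⊕ Fin m) | p.1 ≠ p.2 ∧
        ∀ ℓ v, IsShortestPath (completeBipartiteGraph (Fin 2) (Fin m)) p.1 p.2 ℓ v →
          ∃ i ≤ ℓ, v i ∈ ({Sum.inl c} : Set (Fin 2 ⊕ Fin m))} =
        {z : (Fin 2 ⊕ Fin m) × (Fin 2 ⊕ Fin m) | z.1 ≠ z.2 ∧ (z.1 = Sum.inl c ∨ z.2 = Sum.inl c)} := by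
      ext ⟨x, y⟩
      simp only [Set.mem_setOf_eq]
      constructor
      · rintro ⟨hne, hc⟩
        refine ⟨hne, ?_⟩
        have := (cap_iff hm0 {Sum.inl c} x y hne).mp hc
        rcases x with a | a <;> rcases y with b | b <;>
          simp only [Sum.elim_inl, Sum.elim_inr] at this
        · rcases this with h | h | h
          · exact Or.inl h
          · exact Or.inr h
          · exact absurd (h ⟨0, hm0⟩) (by simp)
        · rcases this with h | h | h
          · exact Or.inl h
          · exact Or.inr h
          · exact h.elim
        · rcases this with h | h | h
          · exact Or.inl h
          · exact Or.inr h
          · exact h.elim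
        · rcases this with h | h | h
          · exact Or.inl h
          · exact Or.inr h
          · have e0 := h 0
            have e1 := h 1
            simp only [Set.mem_singleton_iff, Set.mem_insert_iff, Sum.inl.injEq] at e0 e1
            exact absurd (e0.trans e1.symm) (by decide)
      · rintro ⟨hne, h⟩
        refine ⟨hne, (cap_iff hm0 {Sum.inl c} x y hne).mpr ?_⟩
        rcases h with h | h
        · exact Or.inl (by simp [h])
        · exact Or.inr (Or.inl (by simp [h]))
    rw [hset, card_marked, hcard]
    omega
  -- g({p,q}) = (m+2)(m+1)
  have hboth : gK m {Sum.inl 0, Sum.inl 1} = (m + 2) * (m + 2) - (m + 2) := by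
    unfold gK numPairsCaptured
    have hset : {p : (Fin 2 ⊕ Fin m) × (Fin 2 ⊕ Fin m) | p.1 ≠ p.2 ∧
        ∀ ℓ v, IsShortestPath (completeBipartiteGraph (Fin 2) (Fin m)) p.1 p.2 ℓ v →
          ∃ i ≤ ℓ, v i ∈ ({Sum.inl 0, Sum.inl 1} : Set (Fin 2 ⊕ Fin m))} =
        {z : (Fin 2 ⊕ Fin m) × (Fin 2 ⊕ Fin m) | z.1 ≠ z.2} := by
      ext ⟨x, y⟩
      simp only [Set.mem_setOf_eq]
      constructor
      · exact fun h => h.1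
      · intro hne
        refine ⟨hne, (cap_iff hm0 _ x y hne).mpr ?_⟩
        have hmem : ∀ a : Fin 2, Sum.inl a ∈ ({Sum.inl 0, Sum.inl 1} : Set (Fin 2 ⊕ Fin m)) := by
          intro a
          fin_cases a <;> simp
        rcases x with a | a <;> rcases y with b | b
        · exact Or.inl (hmem a)
        · exact Or.inl (hmem a)
        · exact Or.inr (Or.inl (hmem b))
        · exact Or.inr (Or.inr (by simpa using hmem))
    rw [hset, card_offdiag, hcard]
  have h1 := hone 1
  have h2 := hone 0
  have hval : (m + 2) * (m + 2) - (m + 2) = (m + 1) * (m + 2) := by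
    have : (m + 2) * (m + 2) = (m + 1) * (m + 2) + (m + 2) := by ring
    omega
  rw [hval] at hboth
  refine ⟨by omega, ?_, ?_⟩
  · rw [hboth, h2]
    have : (m + 1) * (m + 2) = m * (m + 1) + 2 * (m + 1) := by ring
    omega
  · rw [hboth, h2, h1, h0]
    have heq : (m + 1) * (m + 2) = m * (m + 1) + 2 * (m + 1) := by ring
    have hk : 2 * (m + 1) < m * (m + 1) := by
      have h2m : 2 < m := by omega
      exact Nat.mul_lt_mul_of_lt_of_le h2m le_rfl (by omega)
    omega
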